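/- The series identity π = ∑_{q≥0} (3/((2q+1)·2^{4q})) · C(2q,q) holds, where C(2q,q) is the central binomial coefficient. -/

import Mathlib

open Real Set MeasureTheory

namespace NewtonPi

/-- `b n = C(2n,n)/4^n`. -/
noncomputable def b (n : ℕ) : ℝ := (Nat.choose (2 * n) n : ℝ) / 4 ^ n

lemma b_nonneg (n : ℕ) : 0 ≤ b n := by rw [b]; positivity

lemma choose_central_le (n : ℕ) : Nat.choose (2 * n) n ≤ 4 ^ n := by
  calc Nat.choose (2 * n) n ≤ Nat.choose (2 * n + 1) n :=
        Nat.choose_le_choose n (Nat.le_succ _)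
    _ ≤ 4 ^ n := Nat.choose_middle_le_pow n

lemma b_le_one (n : ℕ) : b n ≤ 1 := by
  rw [b, div_le_one (by positivity)]
  calc (Nat.choose (2 * n) n : ℝ) ≤ (4 ^ n : ℕ) := by exact_mod_cast choose_central_le n
    _ = 4 ^ n := by push_cast; ring

lemma b_zero : b 0 = 1 := by simp [b]

lemma b_rec (n : ℕ) : (2 * (n : ℝ) + 2) * b (n + 1) = (2 * n + 1) * b n := by
  have h := Nat.succ_mul_centralBinom_succ n
  rw [Nat.centralBinom, Nat.centralBinom] at h
  have h' : ((n : ℝ) + 1) * Nat.choose (2 * (n + 1)) (n + 1)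
      = 2 * (2 * n + 1) * Nat.choose (2 * n) n := by exact_mod_cast h
  rw [b, b]
  have h4 : (4 : ℝ) ^ (n + 1) = 4 * 4 ^ n := by ring
  field_simp [h4]
  linear_combination 2 * (4:ℝ) ^ n * h'


/-- The generating function. -/
noncomputable def f (u : ℝ) : ℝ := ∑' n, b n * u ^ n

lemma summable_f {u : ℝ} (hu : |u| < 1) : Summable (fun n => b n * u ^ n) := by
  refine Summable.of_norm_bounded (summable_geometric_of_lt_one (abs_nonneg u) hu) ?_
  intro n
  rw [norm_mul, norm_pow, Real.norm_eq_abs, Real.norm_eq_abs, abs_of_nonneg (b_nonneg n)]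
  exact mul_le_of_le_one_left (by positivity) (b_le_one n)

lemma summable_fderiv {u : ℝ} (hu : |u| < 1/2) :
    Summable (fun n => b n * (n * u ^ (n - 1))) := by
  refine Summable.of_norm_bounded (g := fun n => (n : ℝ) * (1/2) ^ (n - 1)) ?_ ?_
  · have : Summable (fun n : ℕ => (n : ℝ) * (1/2 : ℝ) ^ n) := by
      simpa using summable_pow_mul_geometric_of_norm_lt_one 1 (r := (1/2 : ℝ)) (by norm_num)
    refine Summable.of_nonneg_of_le (fun n => by positivity) (fun n => ?_) (this.mul_left 2)
    cases n with
    | zero => simp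
    | succ m => simp only [Nat.add_sub_cancel]; rw [pow_succ]; push_cast; ring_nf; nlinarith [pow_nonneg (by norm_num : (0:ℝ) ≤ 1/2) m, (by positivity : (0:ℝ) ≤ (m:ℝ))]
  · intro n
    rw [norm_mul, norm_mul, Real.norm_eq_abs, Real.norm_eq_abs, Real.norm_eq_abs,
      abs_of_nonneg (b_nonneg n), abs_of_nonneg (Nat.cast_nonneg n), abs_pow]
    calc b n * ((n : ℝ) * |u| ^ (n - 1)) ≤ 1 * ((n : ℝ) * (1/2) ^ (n - 1)) := by
          apply mul_le_mul (b_le_one n) ?_ (by positivity) (by norm_num)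
          exact mul_le_mul_of_nonneg_left (pow_le_pow_left₀ (abs_nonneg u) hu.le _) (Nat.cast_nonneg n)
      _ = (n : ℝ) * (1/2) ^ (n - 1) := by ring

/-- derivative of the sum, term by term -/
noncomputable def fd (u : ℝ) : ℝ := ∑' n, b n * ((n : ℝ) * u ^ (n - 1))

lemma hasDerivAt_f {u : ℝ} (hu : u ∈ Ioo (-(1/3) : ℝ) (1/3)) : HasDerivAt f (fd u) u := by
  refine hasDerivAt_tsum_of_isPreconnected
    (u := fun n : ℕ => (n : ℝ) * (1/3 : ℝ) ^ (n - 1))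
    (g := fun n u => b n * u ^ n) (g' := fun n u => b n * ((n : ℝ) * u ^ (n - 1)))
    ?_ isOpen_Ioo (convex_Ioo _ _).isPreconnected
    (fun n y _ => ((hasDerivAt_pow n y).const_mul (b n))) ?_ (by norm_num : (0:ℝ) ∈ Ioo (-(1/3):ℝ) (1/3)) ?_ hu
  · have : Summable (fun n : ℕ => (n : ℝ) * (1/3 : ℝ) ^ n) := by
      simpa using summable_pow_mul_geometric_of_norm_lt_one 1 (r := (1/3 : ℝ)) (by norm_num)
    refine Summable.of_nonneg_of_le (fun n => by positivity) (fun n => ?_) (this.mul_left 3)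
    cases n with
    | zero => simp
    | succ m =>
        simp only [Nat.add_sub_cancel]
        rw [pow_succ]
        push_cast
        nlinarith [pow_nonneg (by norm_num : (0:ℝ) ≤ 1/3) m, (Nat.cast_nonneg m : (0:ℝ) ≤ m)]
  · intro n y hy
    have hy' : |y| ≤ 1/3 := by
      rw [abs_le]; exact ⟨hy.1.le, hy.2.le⟩
    rw [norm_mul, norm_mul, Real.norm_eq_abs, Real.norm_eq_abs, Real.norm_eq_abs,
      abs_of_nonneg (b_nonneg n), abs_of_nonneg (Nat.cast_nonneg n), abs_pow]
    calc b n * ((n : ℝ) * |y| ^ (n - 1)) ≤ 1 * ((n : ℝ) * (1/3) ^ (n - 1)) := by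
          apply mul_le_mul (b_le_one n) ?_ (by positivity) (by norm_num)
          exact mul_le_mul_of_nonneg_left (pow_le_pow_left₀ (abs_nonneg y) hy' _) (Nat.cast_nonneg n)
      _ = (n : ℝ) * (1/3) ^ (n - 1) := by ring
  · exact summable_f (by norm_num)

lemma deriv_identity {u : ℝ} (hu : u ∈ Ioo (-(1/3) : ℝ) (1/3)) :
    (1 - u) * fd u = f u / 2 := by
  have habs : |u| < 1/3 := by rw [abs_lt]; exact ⟨hu.1, hu.2⟩
  have hS : HasSum (fun n => b n * u ^ n) (f u) := (summable_f (habs.trans (by norm_num))).hasSum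
  have hD : HasSum (fun n => b n * ((n : ℝ) * u ^ (n - 1))) (fd u) :=
    (summable_fderiv (habs.trans (by norm_num))).hasSum
  -- shifted version
  have hA : HasSum (fun n : ℕ => b (n + 1) * (((n : ℝ) + 1) * u ^ n)) (fd u) := by
    have h := (hasSum_nat_add_iff' (f := fun n => b n * ((n : ℝ) * u ^ (n - 1))) 1).2 hD
    simpa using h
  have hU : HasSum (fun n : ℕ => (n : ℝ) * b n * u ^ n) (u * fd u) := by
    have hfun : (fun n : ℕ => u * (b n * ((n : ℝ) * u ^ (n - 1))))
        = fun n : ℕ => (n : ℝ) * b n * u ^ n := by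
      funext n
      cases n with
      | zero => simp
      | succ m => simp only [Nat.add_sub_cancel]; push_cast; ring
    have h := hD.mul_left u
    rwa [hfun] at h
  have hH : HasSum (fun n : ℕ => b n * u ^ n * (1/2)) (f u * (1/2)) := hS.mul_right _
  have hB : HasSum (fun n : ℕ => (n : ℝ) * b n * u ^ n + b n * u ^ n * (1/2))
      (u * fd u + f u * (1/2)) := hU.add hH
  have heq : (fun n : ℕ => b (n + 1) * (((n : ℝ) + 1) * u ^ n))
      = (fun n : ℕ => (n : ℝ) * b n * u ^ n + b n * u ^ n * (1/2)) := by
    funext n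
    linear_combination (u ^ n / 2) * b_rec n
  rw [heq] at hA
  have : fd u = u * fd u + f u * (1/2) := hA.unique hB
  linarith

lemma f_mul_sqrt {u : ℝ} (hu : u ∈ Icc (0 : ℝ) (1/4)) : f u * Real.sqrt (1 - u) = 1 := by
  set φ : ℝ → ℝ := fun v => f v * Real.sqrt (1 - v) with hφdef
  have key : ∀ v ∈ Icc (0:ℝ) (1/4), HasDerivAt φ 0 v := by
    intro v hv
    have hv' : v ∈ Ioo (-(1/3) : ℝ) (1/3) := ⟨by linarith [hv.1], by linarith [hv.2]⟩
    have h1v : (0:ℝ) < 1 - v := by linarith [hv.2]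
    have hsqne : Real.sqrt (1 - v) ≠ 0 := by positivity
    have hsq : HasDerivAt (fun w : ℝ => Real.sqrt (1 - w))
        (1 / (2 * Real.sqrt (1 - v)) * (-1)) v := by
      have h1 : HasDerivAt (fun w : ℝ => 1 - w) (-1) v := by
        simpa using (hasDerivAt_id v).const_sub 1
      exact (Real.hasDerivAt_sqrt h1v.ne').comp v h1
    have hmul : HasDerivAt φ
        (fd v * Real.sqrt (1 - v) + f v * (1 / (2 * Real.sqrt (1 - v)) * (-1))) v :=
      (hasDerivAt_f hv').mul hsq
    have hzero : fd v * Real.sqrt (1 - v) + f v * (1 / (2 * Real.sqrt (1 - v)) * (-1)) = 0 := by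
      have hid := deriv_identity hv'
      have hss : Real.sqrt (1 - v) * Real.sqrt (1 - v) = 1 - v := Real.mul_self_sqrt h1v.le
      field_simp
      linear_combination 2 * fd v * hss + 2 * hid
    rwa [hzero] at hmul
  have hcont : ContinuousOn φ (Icc (0:ℝ) (1/4)) := fun v hv =>
    (key v hv).continuousAt.continuousWithinAt
  have hconst := constant_of_has_deriv_right_zero hcont
    (fun v hv => ((key v (Ico_subset_Icc_self hv)).hasDerivWithinAt))
  have h0 : φ 0 = 1 := by
    have hf0 : f 0 = 1 := by
      rw [f]
      rw [tsum_eq_single 0 (fun n hn => by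
        cases n with
        | zero => exact absurd rfl hn
        | succ m => simp)]
      simp [b_zero]
    simp [hφdef, hf0]
  have := hconst u hu
  rw [h0] at this
  exact this

lemma f_eq {u : ℝ} (hu : u ∈ Icc (0 : ℝ) (1/4)) : f u = (Real.sqrt (1 - u))⁻¹ := by
  have h1v : (0:ℝ) < 1 - u := by have := hu.2; linarith
  have hsqne : Real.sqrt (1 - u) ≠ 0 := by positivity
  field_simp
  exact f_mul_sqrt hu


lemma pointwise_sum {x : ℝ} (hx : x ∈ Ioc (0:ℝ) (1/2)) :
    ∑' q : ℕ, (6 : ℝ) * (b q * x ^ (2 * q)) = 6 * (Real.sqrt (1 - x ^ 2))⁻¹ := by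
  have hx2 : x ^ 2 ∈ Icc (0:ℝ) (1/4) := ⟨by positivity, by nlinarith [hx.1, hx.2]⟩
  calc ∑' q : ℕ, (6:ℝ) * (b q * x ^ (2*q)) = 6 * ∑' q : ℕ, b q * (x^2) ^ q := by
        rw [← tsum_mul_left]
        congr 1
        funext q
        rw [← pow_mul]
    _ = 6 * f (x^2) := rfl
    _ = 6 * (Real.sqrt (1 - x^2))⁻¹ := by rw [f_eq hx2]

lemma term_integral (q : ℕ) :
    ∫ x in Ioc (0:ℝ) (1/2), (6:ℝ) * (b q * x ^ (2*q))
      = (3 / ((2 * (q : ℝ) + 1) * (2 : ℝ) ^ (4 * q))) * (Nat.choose (2 * q) q : ℝ) := by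
  rw [← intervalIntegral.integral_of_le (by norm_num : (0:ℝ) ≤ 1/2)]
  have : (fun x : ℝ => (6:ℝ) * (b q * x ^ (2*q))) = fun x : ℝ => (6 * b q) * x ^ (2*q) := by
    funext x; ring
  rw [this, intervalIntegral.integral_const_mul, integral_pow]
  rw [b]
  have hA : (0:ℝ) < 4 ^ q := by positivity
  have h1 : ((1:ℝ)/2) ^ (2*q + 1) = 1 / (2 * 4 ^ q) := by
    rw [pow_succ, pow_mul]
    norm_num
    rw [div_pow]
    norm_num
  have h2 : (2:ℝ) ^ (4 * q) = 4 ^ q * 4 ^ q := by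
    have : 4 * q = 2 * q + 2 * q := by ring
    rw [this, pow_add, pow_mul]
    norm_num
  have hq : (0:ℝ) < 2 * (q:ℕ) + 1 := by positivity
  rw [h2]
  push_cast
  rw [h1]
  field_simp
  ring

theorem hasSum_newton :
    HasSum (fun q : ℕ =>
      (3 / ((2 * (q : ℝ) + 1) * (2 : ℝ) ^ (4 * q))) * (Nat.choose (2 * q) q : ℝ))
      Real.pi := by
  have hmeas : MeasurableSet (Ioc (0:ℝ) (1/2)) := measurableSet_Ioc
  have hInt : ∀ q : ℕ, Integrable (fun x : ℝ => (6:ℝ) * (b q * x ^ (2*q)))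
      (volume.restrict (Ioc (0:ℝ) (1/2))) := by
    intro q
    exact ((continuous_const.mul ((continuous_const.mul (continuous_pow (2*q)))
      : Continuous fun x : ℝ => b q * x ^ (2*q)))).integrableOn_Ioc
  have hnorm : Summable (fun q : ℕ =>
      ∫ x in Ioc (0:ℝ) (1/2), ‖(6:ℝ) * (b q * x ^ (2*q))‖) := by
    refine Summable.of_nonneg_of_le (fun q => ?_) (fun q => ?_)
      ((summable_geometric_of_lt_one (by norm_num : (0:ℝ) ≤ 1/4) (by norm_num)).mul_left 3)
    · positivity
    · have hb : ∀ᵐ x ∂(volume.restrict (Ioc (0:ℝ) (1/2))),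
          ‖(6:ℝ) * (b q * x ^ (2*q))‖ ≤ 6 * (1/4 : ℝ) ^ q := by
        filter_upwards [ae_restrict_mem hmeas] with x hx
        have hx0 : (0:ℝ) ≤ x := hx.1.le
        have : x ^ (2*q) ≤ (1/2 : ℝ) ^ (2*q) := pow_le_pow_left₀ hx0 hx.2 _
        have h14 : ((1:ℝ)/2) ^ (2*q) = (1/4 : ℝ) ^ q := by
          rw [pow_mul]; norm_num
        rw [norm_mul, norm_mul, Real.norm_eq_abs, Real.norm_eq_abs, Real.norm_eq_abs,
          abs_of_nonneg (b_nonneg q), abs_pow, abs_of_nonneg hx0]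
        have h6 : |(6:ℝ)| = 6 := by norm_num
        rw [h6]
        calc 6 * (b q * x ^ (2*q)) ≤ 6 * (1 * (1/2:ℝ) ^ (2*q)) := by
              apply mul_le_mul_of_nonneg_left _ (by norm_num)
              exact mul_le_mul (b_le_one q) this (by positivity) (by norm_num)
          _ = 6 * (1/4:ℝ) ^ q := by rw [one_mul, h14]
      calc (∫ x in Ioc (0:ℝ) (1/2), ‖(6:ℝ) * (b q * x ^ (2*q))‖)
          ≤ ∫ _x in Ioc (0:ℝ) (1/2), 6 * (1/4 : ℝ) ^ q :=
            integral_mono_of_nonneg (ae_of_all _ fun x => norm_nonneg _)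
              (integrableOn_const (by simp)) hb
        _ = 3 * (1/4 : ℝ) ^ q := by
            rw [setIntegral_const]
            simp [Real.volume_Ioc]
            ring
  have key := MeasureTheory.hasSum_integral_of_summable_integral_norm
    (μ := volume.restrict (Ioc (0:ℝ) (1/2)))
    (F := fun (q : ℕ) (x : ℝ) => (6:ℝ) * (b q * x ^ (2*q))) hInt hnorm
  have hval : (∫ x in Ioc (0:ℝ) (1/2), ∑' q : ℕ, (6:ℝ) * (b q * x ^ (2*q))) = Real.pi := by
    rw [setIntegral_congr_fun hmeas (fun x hx => pointwise_sum hx)]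
    rw [← intervalIntegral.integral_of_le (by norm_num : (0:ℝ) ≤ 1/2)]
    have harcsinderiv : ∀ x ∈ uIcc (0:ℝ) (1/2),
        HasDerivAt (fun y => 6 * Real.arcsin y) (6 * (Real.sqrt (1 - x ^ 2))⁻¹) x := by
      intro x hx
      rw [uIcc_of_le (by norm_num : (0:ℝ) ≤ 1/2)] at hx
      have h1 : x ≠ -1 := by intro h; rw [h] at hx; norm_num at hx
      have h2 : x ≠ 1 := by intro h; rw [h] at hx; norm_num at hx
      have := (Real.hasDerivAt_arcsin h1 h2).const_mul (6:ℝ)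
      simpa [one_div] using this
    have hcontOn : ContinuousOn (fun x : ℝ => 6 * (Real.sqrt (1 - x ^ 2))⁻¹)
        (uIcc (0:ℝ) (1/2)) := by
      rw [uIcc_of_le (by norm_num : (0:ℝ) ≤ 1/2)]
      apply ContinuousOn.mul continuousOn_const
      apply ContinuousOn.inv₀
      · exact (Real.continuous_sqrt.comp (continuous_const.sub (continuous_pow 2))).continuousOn
      · intro x hx
        have : (0:ℝ) < 1 - x ^ 2 := by nlinarith [hx.1, hx.2]
        positivity
    rw [intervalIntegral.integral_eq_sub_of_hasDerivAt harcsinderiv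
      hcontOn.intervalIntegrable]
    have harc : Real.arcsin (1/2) = Real.pi / 6 := by
      rw [← Real.sin_pi_div_six]
      exact Real.arcsin_sin (by linarith [Real.pi_pos]) (by linarith [Real.pi_pos])
    rw [Real.arcsin_zero, harc]
    ring
  rw [hval] at key
  have hfun : (fun q : ℕ => ∫ x in Ioc (0:ℝ) (1/2), (6:ℝ) * (b q * x ^ (2*q)))
      = fun q : ℕ => (3 / ((2 * (q : ℝ) + 1) * (2 : ℝ) ^ (4 * q))) * (Nat.choose (2 * q) q : ℝ) := by
    funext q
    exact term_integral q
  rwa [hfun] at key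

end NewtonPi

/-- Newton's identity: `π = ∑_{q≥0} (3/((2q+1)·2^{4q})) · C(2q,q)`. -/
theorem newton_pi_series :
    HasSum (fun q : ℕ =>
      (3 / ((2 * (q : ℝ) + 1) * (2 : ℝ) ^ (4 * q))) * (Nat.choose (2 * q) q : ℝ))
      Real.pi :=
  NewtonPi.hasSum_newton
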